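/- For any positive integer $k$ and any integer $n \ge 3$, the wheel graph $C_n + K_1$ satisfies $\dim_k(C_n + K_1) = 3$ if $n \in \{3, 6\}$, and $\dim_k(C_n + K_1) = \lfloor \tfrac{2n+2}{5} \rfloor$ otherwise. -/

import Mathlib

open SimpleGraph

/-- The distance-`k` truncated distance `dₖ(x,y) = min{d(x,y), k+1}`, valued in `ℕ∞`
(so unreachable pairs have distance `⊤`, which is truncated to `k+1`). -/
noncomputable def distK {V : Type*} (G : SimpleGraph V) (k : ℕ) (x y : V) : ℕ∞ :=
  min (G.edist x y) (k + 1)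

/-- `S` is a distance-`k` resolving set of `G`. -/
def IsDistKResolving {V : Type*} (G : SimpleGraph V) (k : ℕ) (S : Set V) : Prop :=
  ∀ x y : V, x ≠ y → ∃ z ∈ S, distK G k x z ≠ distK G k y z

/-- The distance-`k` dimension of a finite graph `G`: the minimum cardinality of a
distance-`k` resolving set of `G`. -/
noncomputable def dimK {V : Type*} [Fintype V] (G : SimpleGraph V) (k : ℕ) : ℕ :=
  sInf { m | ∃ S : Finset V, IsDistKResolving G k ↑S ∧ S.card = m }

/-- The join of two graphs: their disjoint union together with all edges between them. -/
def graphJoin {α β : Type*} (G : SimpleGraph α) (H : SimpleGraph β) :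
    SimpleGraph (α ⊕ β) where
  Adj x y := match x, y with
    | Sum.inl a, Sum.inl b => G.Adj a b
    | Sum.inr a, Sum.inr b => H.Adj a b
    | Sum.inl _, Sum.inr _ => True
    | Sum.inr _, Sum.inl _ => True
  symm := by
    constructor
    rintro (a | a) (b | b) h
    · exact G.adj_symm h
    · trivial
    · trivial
    · exact H.adj_symm h
  loopless := by
    constructor
    rintro (a | a) h
    · exact G.loopless.irrefl a h
    · exact H.loopless.irrefl a h

instance graphJoin.decAdj {α β : Type*} (G : SimpleGraph α) (H : SimpleGraph β)
    [DecidableRel G.Adj] [DecidableRel H.Adj] : DecidableRel (graphJoin G H).Adj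
  | Sum.inl a, Sum.inl b => inferInstanceAs (Decidable (G.Adj a b))
  | Sum.inl _, Sum.inr _ => inferInstanceAs (Decidable True)
  | Sum.inr _, Sum.inl _ => inferInstanceAs (Decidable True)
  | Sum.inr a, Sum.inr b => inferInstanceAs (Decidable (H.Adj a b))

/-- The wheel graph. -/
abbrev Wn (N : ℕ) : SimpleGraph (Fin (N + 3) ⊕ Fin 1) :=
  graphJoin (cycleGraph (N + 3)) (⊤ : SimpleGraph (Fin 1))

lemma wn_adj_ll {N : ℕ} (a b : Fin (N + 3)) :
    (Wn N).Adj (Sum.inl a) (Sum.inl b) ↔ (cycleGraph (N + 3)).Adj a b := Iff.rfl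

lemma wn_adj_lr {N : ℕ} (a : Fin (N + 3)) (b : Fin 1) :
    (Wn N).Adj (Sum.inl a) (Sum.inr b) := trivial

lemma wn_adj_rl {N : ℕ} (a : Fin 1) (b : Fin (N + 3)) :
    (Wn N).Adj (Sum.inr a) (Sum.inl b) := trivial

lemma wn_not_adj_rr {N : ℕ} (a b : Fin 1) : ¬ (Wn N).Adj (Sum.inr a) (Sum.inr b) := by
  have : a = b := Subsingleton.elim a b
  subst this
  exact (Wn N).loopless.irrefl _

/-- every vertex is adjacent-or-equal to the hub, and the graph has diameter ≤ 2 -/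
lemma wn_edist_le_two {N : ℕ} (x y : Fin (N + 3) ⊕ Fin 1) : (Wn N).edist x y ≤ 2 := by
  rcases eq_or_ne x y with rfl | hxy
  · simp [edist_self]
  by_cases hadj : (Wn N).Adj x y
  · rw [← edist_eq_one_iff_adj] at hadj
    rw [hadj]; norm_num
  · -- both must be inl
    match x, y with
    | Sum.inl a, Sum.inl b =>
      have h1 : (Wn N).edist (Sum.inl a) (Sum.inr 0) = 1 := edist_eq_one_iff_adj.mpr (wn_adj_lr a 0)
      have h2 : (Wn N).edist (Sum.inr 0) (Sum.inl b) = 1 := edist_eq_one_iff_adj.mpr (wn_adj_rl 0 b)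
      calc (Wn N).edist (Sum.inl a) (Sum.inl b) ≤ _ + _ := SimpleGraph.edist_triangle (v := Sum.inr 0)
        _ = 2 := by rw [h1, h2]; rfl
    | Sum.inl a, Sum.inr b => exact absurd (wn_adj_lr a b) hadj
    | Sum.inr a, Sum.inl b => exact absurd (wn_adj_rl a b) hadj
    | Sum.inr a, Sum.inr b =>
      have : a = b := Subsingleton.elim a b
      subst this
      exact absurd rfl hxy

/-- the combinatorial distance code -/
def codeN (N : ℕ) (x y : Fin (N + 3) ⊕ Fin 1) : ℕ :=
  if x = y then 0 else if (Wn N).Adj x y then 1 else 2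

lemma wn_edist_eq {N : ℕ} (x y : Fin (N + 3) ⊕ Fin 1) :
    (Wn N).edist x y = (codeN N x y : ℕ∞) := by
  unfold codeN
  split_ifs with h1 h2
  · subst h1; simp [edist_self]
  · rw [edist_eq_one_iff_adj.mpr h2]; rfl
  · refine le_antisymm (by exact_mod_cast wn_edist_le_two x y) ?_
    have h0 : (Wn N).edist x y ≠ 0 := by
      simp [edist_eq_zero_iff, h1]
    have hne1 : (Wn N).edist x y ≠ 1 := fun h => h2 (edist_eq_one_iff_adj.mp h)
    have hle := wn_edist_le_two (N := N) x y
    have htop : (Wn N).edist x y ≠ ⊤ := by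
      intro h; rw [h] at hle; exact absurd hle (by norm_num)
    lift (Wn N).edist x y to ℕ using htop with e he
    have : e ≠ 0 := by exact_mod_cast h0
    have : e ≠ 1 := by exact_mod_cast hne1
    have : e ≤ 2 := by exact_mod_cast hle
    have : 2 ≤ e := by omega
    exact_mod_cast this

lemma distK_wn_eq {N k : ℕ} (hk : 1 ≤ k) (x y : Fin (N + 3) ⊕ Fin 1) :
    distK (Wn N) k x y = (codeN N x y : ℕ∞) := by
  rw [distK, wn_edist_eq]
  refine min_eq_left ?_
  have h2 : (codeN N x y : ℕ∞) ≤ 2 := by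
    have : codeN N x y ≤ 2 := by unfold codeN; split_ifs <;> omega
    exact_mod_cast this
  refine h2.trans ?_
  have : (2 : ℕ∞) = ((2 : ℕ) : ℕ∞) := rfl
  have hk2 : ((2:ℕ) : ℕ∞) ≤ ((k+1 : ℕ) : ℕ∞) := by exact_mod_cast (by omega : 2 ≤ k + 1)
  rw [this]
  refine hk2.trans_eq ?_
  push_cast
  rfl

/-- decidable reformulation of resolving -/
def Qp (N : ℕ) (S : Finset (Fin (N + 3) ⊕ Fin 1)) : Prop :=
  ∀ x y, x ≠ y → ∃ z ∈ S, codeN N x z ≠ codeN N y z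

instance (N : ℕ) (S : Finset (Fin (N + 3) ⊕ Fin 1)) : Decidable (Qp N S) := by
  unfold Qp; infer_instance

lemma resolving_iff_Qp {N k : ℕ} (hk : 1 ≤ k) (S : Finset (Fin (N + 3) ⊕ Fin 1)) :
    IsDistKResolving (Wn N) k ↑S ↔ Qp N S := by
  unfold IsDistKResolving Qp
  refine forall₃_congr fun x y _ => exists_congr fun z => and_congr_right fun _ => ?_
  rw [distK_wn_eq hk, distK_wn_eq hk]
  constructor
  · intro h he; exact h (by exact_mod_cast he)
  · intro h he; exact h (by exact_mod_cast he)

lemma dimK_wn_eq {N k : ℕ} (hk : 1 ≤ k) (c : ℕ)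
    (hex : ∃ S : Finset (Fin (N + 3) ⊕ Fin 1), Qp N S ∧ S.card = c)
    (hlb : ∀ S : Finset (Fin (N + 3) ⊕ Fin 1), Qp N S → c ≤ S.card) :
    dimK (Wn N) k = c := by
  obtain ⟨S, hS, hcard⟩ := hex
  refine le_antisymm ?_ ?_
  · exact Nat.sInf_le ⟨S, (resolving_iff_Qp hk S).mpr hS, hcard⟩
  · refine le_csInf ⟨c, S, (resolving_iff_Qp hk S).mpr hS, hcard⟩ ?_
    rintro m ⟨T, hT, rfl⟩
    exact hlb T ((resolving_iff_Qp hk T).mp hT)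

open Fin.CommRing in
lemma cyc_adj_iff {N : ℕ} (u v : Fin (N+3)) :
    (cycleGraph (N+3)).Adj u v ↔ v = u - 1 ∨ v = u + 1 := by
  rw [cycleGraph_adj]
  have h1 : u - v = 1 ↔ v = u - 1 := ⟨fun h => by rw [← h]; ring, fun h => by rw [h]; ring⟩
  have h2 : v - u = 1 ↔ v = u + 1 := ⟨fun h => by rw [← h]; ring, fun h => by rw [h]; ring⟩
  rw [h1, h2]

open Fin.CommRing in
lemma fin_two_ne_zero {N : ℕ} : (2 : Fin (N+3)) ≠ 0 := by
  intro h
  have h12 : (2 : Fin (N+3)) = 1 + 1 := by norm_num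
  have hv : ((2 : Fin (N+3)) : ℕ) = ((1:ℕ) % (N+3) + (1:ℕ) % (N+3)) % (N+3) := by
    rw [h12, Fin.val_add, Fin.val_one']
  have e1 : (1:ℕ) % (N+3) = 1 := Nat.mod_eq_of_lt (by omega)
  rw [e1] at hv
  rw [Nat.mod_eq_of_lt (by omega)] at hv
  rw [h] at hv
  simp at hv

open Fin.CommRing in
lemma sub_one_ne_add_one {N : ℕ} (u : Fin (N+3)) : u - 1 ≠ u + 1 := by
  intro h
  have : (2 : Fin (N+3)) = 0 := by
    have := congrArg (fun x => x - (u - 1)) h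
    rw [sub_self] at this
    have h2 : u + 1 - (u - 1) = 2 := by ring
    rw [h2] at this
    exact this.symm
  exact fin_two_ne_zero this

attribute [local simp] wn_adj_ll

lemma lower_bound {N : ℕ} (S : Finset (Fin (N+3) ⊕ Fin 1)) (hQ : Qp N S) :
    2 * (N + 3) ≤ 5 * S.card + 2 := by
  classical
  set T : Finset (Fin (N+3)) := Finset.univ.filter (fun i => Sum.inl i ∈ S) with hT
  set cs : Fin (N+3) → Finset (Fin (N+3)) :=
    fun u => T.filter (fun w => (cycleGraph (N+3)).Adj u w) with hcs
  have hinj : ∀ u v : Fin (N+3), u ∉ T → v ∉ T → cs u = cs v → u = v := by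
    intro u v hu hv hcseq
    by_contra hne
    obtain ⟨z, hzS, hcode⟩ := hQ (Sum.inl u) (Sum.inl v) (by simpa using hne)
    match z with
    | Sum.inr c =>
      apply hcode
      unfold codeN
      rw [if_neg (show ¬ (Sum.inl u = Sum.inr c) by simp), if_pos (wn_adj_lr u c),
        if_neg (show ¬ (Sum.inl v = Sum.inr c) by simp), if_pos (wn_adj_lr v c)]
    | Sum.inl w =>
      have hwT : w ∈ T := by simp [hT, hzS]
      have huw : u ≠ w := fun h => hu (h ▸ hwT)
      have hvw : v ≠ w := fun h => hv (h ▸ hwT)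
      have hmem : (w ∈ cs u) ↔ (w ∈ cs v) := by rw [hcseq]
      simp only [hcs, Finset.mem_filter, hwT, true_and] at hmem
      apply hcode
      simp only [codeN, Sum.inl.injEq, if_neg huw, if_neg hvw]
      by_cases hA : (cycleGraph (N+3)).Adj u w
      · simp only [wn_adj_ll]
        rw [if_pos hA, if_pos (hmem.mp hA)]
      · simp only [wn_adj_ll]
        rw [if_neg hA, if_neg (fun h => hA (hmem.mpr h))]
  set U : Finset (Fin (N+3)) := Finset.univ.filter (fun u => Sum.inl u ∉ S) with hU
  have hUT : ∀ u, u ∈ U ↔ u ∉ T := by intro u; simp [hU, hT]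
  set c : Fin (N+3) → ℕ := fun u => (cs u).card with hc
  have hcsub : ∀ u, cs u ⊆ {u - 1, u + 1} := by
    intro u w hw
    simp only [hcs, Finset.mem_filter] at hw
    have := (cyc_adj_iff u w).mp hw.2
    simpa using this
  have hpair : ∀ u : Fin (N+3), ({u - 1, u + 1} : Finset (Fin (N+3))).card ≤ 2 := by
    intro u
    refine le_trans (Finset.card_insert_le _ _) ?_
    simp
  have hcle : ∀ u, c u ≤ 2 := fun u => le_trans (Finset.card_le_card (hcsub u)) (hpair u)
  set U0 := U.filter (fun u => c u = 0) with hU0def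
  set U1 := U.filter (fun u => c u = 1) with hU1def
  set U2 := U.filter (fun u => c u = 2) with hU2def
  have hUsplit : U.card = U0.card + U1.card + U2.card := by
    have e3 : U0.card + U1.card + U2.card = ∑ u ∈ U, ((if c u = 0 then 1 else 0)
        + ((if c u = 1 then 1 else 0) + (if c u = 2 then 1 else 0)) : ℕ) := by
      rw [hU0def, hU1def, hU2def]
      simp only [Finset.card_filter]
      rw [← Finset.sum_add_distrib, ← Finset.sum_add_distrib]
      exact Finset.sum_congr rfl (fun u _ => by ring)
    rw [e3, Finset.card_eq_sum_ones U]
    exact Finset.sum_congr rfl (fun u _ => by have := hcle u; split_ifs <;> omega)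
  have hU0 : U0.card ≤ 1 := by
    refine Finset.card_le_one.mpr ?_
    intro a ha b hb
    simp only [hU0def, Finset.mem_filter] at ha hb
    have ha0 : cs a = ∅ := Finset.card_eq_zero.mp ha.2
    have hb0 : cs b = ∅ := Finset.card_eq_zero.mp hb.2
    exact hinj a b ((hUT a).mp ha.1) ((hUT b).mp hb.1) (ha0.trans hb0.symm)
  set g : Fin (N+3) → Fin (N+3) :=
    fun u => if h : (cs u).Nonempty then h.choose else u with hg
  have hg1 : ∀ u ∈ U1, cs u = {g u} := by
    intro u hu
    have hc1 : c u = 1 := (Finset.mem_filter.mp hu).2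
    obtain ⟨a, ha⟩ := Finset.card_eq_one.mp hc1
    have hne : (cs u).Nonempty := by rw [ha]; exact ⟨a, Finset.mem_singleton_self a⟩
    have hga : g u = a := by
      simp only [hg, dif_pos hne]
      have hch : Exists.choose hne ∈ ({a} : Finset (Fin (N+3))) := by
        rw [← ha]; exact hne.choose_spec
      simpa using hch
    rw [hga]; exact ha
  have hgT : ∀ u ∈ U1, g u ∈ T := by
    intro u hu
    have h1 := hg1 u hu
    have h2 : g u ∈ cs u := by rw [h1]; exact Finset.mem_singleton_self _
    exact (Finset.mem_filter.mp h2).1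
  have hU1sum : U1.card = ∑ w ∈ T, (U1.filter (fun u => g u = w)).card :=
    Finset.card_eq_sum_card_fiberwise hgT
  set aw : Fin (N+3) → ℕ := fun w => (U1.filter (fun u => g u = w)).card with haw
  set bw : Fin (N+3) → ℕ :=
    fun w => (U2.filter (fun u => (cycleGraph (N+3)).Adj u w)).card with hbw
  have hbwsum : ∑ w ∈ T, bw w = 2 * U2.card := by
    have e1 : ∑ w ∈ T, bw w = ∑ w ∈ T, ∑ u ∈ U2, ite ((cycleGraph (N+3)).Adj u w) 1 0 := by
      refine Finset.sum_congr rfl fun w _ => ?_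
      rw [hbw]; exact Finset.card_filter _ _
    rw [e1, Finset.sum_comm]
    have e2 : ∀ u ∈ U2, (∑ w ∈ T, ite ((cycleGraph (N+3)).Adj u w) 1 0) = 2 := by
      intro u hu
      have : (∑ w ∈ T, ite ((cycleGraph (N+3)).Adj u w) 1 0) = c u :=
        (Finset.card_filter _ _).symm
      rw [this]
      exact (Finset.mem_filter.mp hu).2
    rw [Finset.sum_congr rfl e2, Finset.sum_const, smul_eq_mul, mul_comm]
  have hadj_mem : ∀ (w x : Fin (N+3)), (cycleGraph (N+3)).Adj x w → x = w - 1 ∨ x = w + 1 :=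
    fun w x h => (cyc_adj_iff w x).mp h.symm
  have hkey : ∀ w ∈ T, 2 * aw w + bw w ≤ 3 := by
    intro w hw
    have haw1 : aw w ≤ 1 := by
      refine Finset.card_le_one.mpr ?_
      intro x hx y hy
      simp only [Finset.mem_filter] at hx hy
      have hx1 : cs x = {w} := by rw [hg1 x hx.1, hx.2]
      have hy1 : cs y = {w} := by rw [hg1 y hy.1, hy.2]
      exact hinj x y ((hUT x).mp (Finset.mem_filter.mp hx.1).1)
        ((hUT y).mp (Finset.mem_filter.mp hy.1).1) (hx1.trans hy1.symm)
    have hbw2 : bw w ≤ 2 := by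
      refine le_trans (Finset.card_le_card ?_) (hpair w)
      intro x hx
      simp only [hbw, Finset.mem_filter] at hx
      have := hadj_mem w x hx.2
      simpa using this
    by_cases h0 : aw w = 0
    · omega
    · have haw' : aw w = 1 := by omega
      obtain ⟨x₀, hx₀⟩ := Finset.card_eq_one.mp haw'
      have hx₀mem : x₀ ∈ U1.filter (fun u => g u = w) := by
        rw [hx₀]; exact Finset.mem_singleton_self _
      simp only [Finset.mem_filter] at hx₀mem
      have hcsx₀ : cs x₀ = {w} := by rw [hg1 x₀ hx₀mem.1, hx₀mem.2]
      have hx₀adj : (cycleGraph (N+3)).Adj x₀ w := by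
        have : w ∈ cs x₀ := by rw [hcsx₀]; exact Finset.mem_singleton_self _
        exact ((Finset.mem_filter.mp this).2)
      have hx₀pos : x₀ = w - 1 ∨ x₀ = w + 1 := hadj_mem w x₀ hx₀adj
      have hbw1 : bw w ≤ 1 := by
        refine Finset.card_le_one.mpr ?_
        intro x hx y hy
        simp only [hbw, Finset.mem_filter] at hx hy
        have hxp : x = w - 1 ∨ x = w + 1 := hadj_mem w x hx.2
        have hyp : y = w - 1 ∨ y = w + 1 := hadj_mem w y hy.2
        have hxne : x ≠ x₀ := by
          intro h
          have hcx : c x = 2 := (Finset.mem_filter.mp hx.1).2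
          have : c x₀ = 1 := by show (cs x₀).card = 1; rw [hcsx₀]; simp
          rw [h] at hcx; omega
        have hyne : y ≠ x₀ := by
          intro h
          have hcy : c y = 2 := (Finset.mem_filter.mp hy.1).2
          have : c x₀ = 1 := by show (cs x₀).card = 1; rw [hcsx₀]; simp
          rw [h] at hcy; omega
        rcases hxp with rfl | rfl <;> rcases hyp with rfl | rfl
        · rfl
        · rcases hx₀pos with h | h
          · exact absurd h.symm hxne
          · exact absurd h.symm hyne
        · rcases hx₀pos with h | h
          · exact absurd h.symm hyne
          · exact absurd h.symm hxne
        · rfl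
      omega
  have h2sum : 2 * U1.card + 2 * U2.card ≤ 3 * T.card := by
    have e : 2 * U1.card + 2 * U2.card = ∑ w ∈ T, (2 * aw w + bw w) := by
      rw [Finset.sum_add_distrib, ← Finset.mul_sum, ← hU1sum, hbwsum]
    rw [e]
    calc ∑ w ∈ T, (2 * aw w + bw w) ≤ ∑ w ∈ T, 3 := Finset.sum_le_sum hkey
      _ = 3 * T.card := by rw [Finset.sum_const, smul_eq_mul, mul_comm]
  have hUTcard : T.card + U.card = N + 3 := by
    have hUc : U = Tᶜ := by
      ext u
      simp only [Finset.mem_compl]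
      exact hUT u
    have h1 : T.card ≤ N + 3 := le_trans (Finset.card_le_univ T) (by simp)
    rw [hUc, Finset.card_compl, Fintype.card_fin]
    omega
  have hTS : T.card ≤ S.card := by
    refine Finset.card_le_card_of_injOn Sum.inl ?_ ?_
    · intro i hi; exact (Finset.mem_filter.mp hi).2
    · intro a _ b _ h; exact Sum.inl_injective h
  omega

/-! ### Upper bound machinery -/

def nadj (n a b : ℕ) : Prop :=
  b = a + 1 ∨ a = b + 1 ∨ (a = 0 ∧ b = n - 1) ∨ (b = 0 ∧ a = n - 1)

instance (n a b : ℕ) : Decidable (nadj n a b) := by unfold nadj; infer_instance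

open Fin.CommRing in
lemma adj_val {N : ℕ} (u v : Fin (N+3)) :
    (cycleGraph (N+3)).Adj u v ↔ nadj (N+3) u.val v.val := by
  rw [cyc_adj_iff]
  have h1 : (v = u - 1) ↔ (u = v + 1) := ⟨fun h => by rw [h]; ring, fun h => by rw [h]; ring⟩
  rw [h1]
  rw [Fin.ext_iff (a := u) (b := v + 1), Fin.ext_iff (a := v) (b := u + 1)]
  have e1 : ((v + 1 : Fin (N+3)) : ℕ) = (v.val + 1) % (N+3) := by
    rw [Fin.val_add, Fin.val_one']
    rw [Nat.mod_eq_of_lt (show (1:ℕ) < N+3 by omega)]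
  have e2 : ((u + 1 : Fin (N+3)) : ℕ) = (u.val + 1) % (N+3) := by
    rw [Fin.val_add, Fin.val_one']
    rw [Nat.mod_eq_of_lt (show (1:ℕ) < N+3 by omega)]
  have m1 : (v.val + 1) % (N+3) = if v.val + 1 = N+3 then 0 else v.val + 1 := by
    split_ifs with h
    · rw [h, Nat.mod_self]
    · exact Nat.mod_eq_of_lt (by have := v.isLt; omega)
  have m2 : (u.val + 1) % (N+3) = if u.val + 1 = N+3 then 0 else u.val + 1 := by
    split_ifs with h
    · rw [h, Nat.mod_self]
    · exact Nat.mod_eq_of_lt (by have := u.isLt; omega)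
  rw [e1, e2, m1, m2]
  have hu := u.isLt
  have hv := v.isLt
  unfold nadj
  split_ifs <;> omega

lemma Qp_of_pattern {N : ℕ} (p : ℕ → Prop) [DecidablePred p]
    (H1 : ∀ a b : ℕ, a < N+3 → b < N+3 → ¬ p a → ¬ p b → a ≠ b →
       ∃ c, c < N+3 ∧ p c ∧ ¬ (nadj (N+3) a c ↔ nadj (N+3) b c))
    (H2 : ∀ a : ℕ, a < N+3 → ¬ p a → ∃ c, c < N+3 ∧ p c ∧ c ≠ a ∧ ¬ nadj (N+3) a c) :
    Qp N ((Finset.univ.filter (fun i : Fin (N+3) => p i.val)).image Sum.inl) := by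
  intro x y hxy
  set S : Finset (Fin (N+3) ⊕ Fin 1) := (Finset.univ.filter (fun i : Fin (N+3) => p i.val)).image Sum.inl with hS
  have hmem : ∀ w : Fin (N+3), Sum.inl w ∈ S ↔ p w.val := by
    intro w; simp [hS]
  have code_self : ∀ (u : Fin (N+3)) (y : Fin (N+3) ⊕ Fin 1), y ≠ Sum.inl u →
      codeN N y (Sum.inl u) ≠ codeN N (Sum.inl u) (Sum.inl u) := by
    intro u y hy
    unfold codeN
    rw [if_pos rfl, if_neg hy]
    split_ifs <;> omega
  match x, y with
  | Sum.inr a, Sum.inr b =>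
    exact absurd (by rw [Subsingleton.elim a b]) hxy
  | Sum.inl u, Sum.inl v =>
    have huv : u ≠ v := by simpa using hxy
    by_cases hpu : p u.val
    · exact ⟨Sum.inl u, (hmem u).mpr hpu,
        fun h => code_self u (Sum.inl v) (by simpa using huv.symm) h.symm⟩
    by_cases hpv : p v.val
    · exact ⟨Sum.inl v, (hmem v).mpr hpv,
        code_self v (Sum.inl u) (by simpa using huv)⟩
    obtain ⟨c, hc, hpc, hne⟩ :=
      H1 u.val v.val u.isLt v.isLt hpu hpv (fun h => huv (Fin.ext h))
    set w : Fin (N+3) := ⟨c, hc⟩ with hw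
    have huw : u ≠ w := fun h => hpu (by rw [h]; exact hpc)
    have hvw : v ≠ w := fun h => hpv (by rw [h]; exact hpc)
    refine ⟨Sum.inl w, (hmem w).mpr hpc, ?_⟩
    unfold codeN
    simp only [wn_adj_ll]
    rw [if_neg (show ¬ (Sum.inl u = Sum.inl w) by simpa using huw),
      if_neg (show ¬ (Sum.inl v = Sum.inl w) by simpa using hvw)]
    have hau : (cycleGraph (N+3)).Adj u w ↔ nadj (N+3) u.val c := adj_val u w
    have hav : (cycleGraph (N+3)).Adj v w ↔ nadj (N+3) v.val c := adj_val v w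
    by_cases hA : (cycleGraph (N+3)).Adj u w
    · have hA2 : ¬ (cycleGraph (N+3)).Adj v w := by
        intro h
        exact hne (iff_of_true (hau.mp hA) (hav.mp h))
      rw [if_pos hA, if_neg hA2]; omega
    · have hA2 : (cycleGraph (N+3)).Adj v w := by
        by_contra h
        exact hne (iff_of_false (fun hh => hA (hau.mpr hh)) (fun hh => h (hav.mpr hh)))
      rw [if_neg hA, if_pos hA2]; omega
  | Sum.inl u, Sum.inr b =>
    by_cases hpu : p u.val
    · exact ⟨Sum.inl u, (hmem u).mpr hpu,
        fun h => code_self u (Sum.inr b) (by simp) h.symm⟩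
    · obtain ⟨c, hc, hpc, hca, hnadj⟩ := H2 u.val u.isLt hpu
      set w : Fin (N+3) := ⟨c, hc⟩ with hw
      have huw : u ≠ w := fun h => hca (by rw [h])
      refine ⟨Sum.inl w, (hmem w).mpr hpc, ?_⟩
      have hnA : ¬ (cycleGraph (N+3)).Adj u w := fun h => hnadj ((adj_val u w).mp h)
      unfold codeN
      simp only [wn_adj_ll]
      rw [if_neg (show ¬ (Sum.inl u = Sum.inl w) by simpa using huw), if_neg hnA,
        if_neg (show ¬ (Sum.inr b = Sum.inl w) by simp), if_pos (wn_adj_rl b w)]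
      omega
  | Sum.inr a, Sum.inl v =>
    by_cases hpv : p v.val
    · exact ⟨Sum.inl v, (hmem v).mpr hpv,
        code_self v (Sum.inr a) (by simp)⟩
    · obtain ⟨c, hc, hpc, hca, hnadj⟩ := H2 v.val v.isLt hpv
      set w : Fin (N+3) := ⟨c, hc⟩ with hw
      have hvw : v ≠ w := fun h => hca (by rw [h])
      refine ⟨Sum.inl w, (hmem w).mpr hpc, ?_⟩
      have hnA : ¬ (cycleGraph (N+3)).Adj v w := fun h => hnadj ((adj_val v w).mp h)
      unfold codeN
      simp only [wn_adj_ll]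
      rw [if_neg (show ¬ (Sum.inr a = Sum.inl w) by simp), if_pos (wn_adj_rl a w),
        if_neg (show ¬ (Sum.inl v = Sum.inl w) by simpa using hvw), if_neg hnA]
      omega

lemma H1_of_P1P2 {N : ℕ} (hn : 7 ≤ N + 3) (p : ℕ → Prop)
    (P1 : ∀ a b : ℕ, a < N+3 → b < N+3 → ¬ p a → ¬ p b →
        (∀ c, c < N+3 → nadj (N+3) a c → ¬ p c) →
        (∀ c, c < N+3 → nadj (N+3) b c → ¬ p c) → a = b)
    (P2 : ∀ w, w < N+3 → p w → ∃ c, c < N+3 ∧ p c ∧ c ≠ w ∧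
        ((c ≤ w + 2 ∧ w ≤ c + 2) ∨ (w + (N+3) ≤ c + 2) ∨ (c + (N+3) ≤ w + 2))) :
    ∀ a b : ℕ, a < N+3 → b < N+3 → ¬ p a → ¬ p b → a ≠ b →
       ∃ c, c < N+3 ∧ p c ∧ ¬ (nadj (N+3) a c ↔ nadj (N+3) b c) := by
  intro a b ha hb hpa hpb hab
  by_contra hcon
  push_neg at hcon
  -- hcon : ∀ c, c < N+3 → p c → (nadj (N+3) a c ↔ nadj (N+3) b c)
  obtain ⟨ra, hraP⟩ : ∃ ra, (ra = a+1 ∧ a+1 < N+3) ∨ (ra = 0 ∧ a+1 = N+3) := by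
    by_cases h : a + 1 = N+3
    · exact ⟨0, Or.inr ⟨rfl, h⟩⟩
    · exact ⟨a+1, Or.inl ⟨rfl, by omega⟩⟩
  obtain ⟨la, hlaP⟩ : ∃ la, (la = a-1 ∧ 1 ≤ a) ∨ (la = N+3-1 ∧ a = 0) := by
    by_cases h : a = 0
    · exact ⟨N+3-1, Or.inr ⟨rfl, h⟩⟩
    · exact ⟨a-1, Or.inl ⟨rfl, by omega⟩⟩
  obtain ⟨rb, hrbP⟩ : ∃ rb, (rb = b+1 ∧ b+1 < N+3) ∨ (rb = 0 ∧ b+1 = N+3) := by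
    by_cases h : b + 1 = N+3
    · exact ⟨0, Or.inr ⟨rfl, h⟩⟩
    · exact ⟨b+1, Or.inl ⟨rfl, by omega⟩⟩
  obtain ⟨lb, hlbP⟩ : ∃ lb, (lb = b-1 ∧ 1 ≤ b) ∨ (lb = N+3-1 ∧ b = 0) := by
    by_cases h : b = 0
    · exact ⟨N+3-1, Or.inr ⟨rfl, h⟩⟩
    · exact ⟨b-1, Or.inl ⟨rfl, by omega⟩⟩
  have hnbr_a : ∀ c, c < N+3 → nadj (N+3) a c → c = ra ∨ c = la := by
    intro c hcn hc; unfold nadj at hc; omega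
  have hnbr_b : ∀ c, c < N+3 → nadj (N+3) b c → c = rb ∨ c = lb := by
    intro c hcn hc; unfold nadj at hc; omega
  by_cases hpra : p ra
  · have hbra : nadj (N+3) b ra :=
      (hcon ra (by omega) hpra).mp (by unfold nadj; omega)
    by_cases hpla : p la
    · have hbla : nadj (N+3) b la :=
        (hcon la (by omega) hpla).mp (by unfold nadj; omega)
      unfold nadj at hbra hbla
      omega
    · -- p ra, ¬ p la : ra is a landmark with empty surroundings
      obtain ⟨b2, hb2n, hb2nbr, hb2ne⟩ : ∃ b2, b2 < N+3 ∧ nadj (N+3) b b2 ∧ b2 ≠ ra := by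
        by_cases h : rb = ra
        · exact ⟨lb, by omega, by unfold nadj; omega, by unfold nadj at hbra; omega⟩
        · exact ⟨rb, by omega, by unfold nadj; omega, h⟩
      have hpb2 : ¬ p b2 := by
        intro hp
        have h2 : nadj (N+3) a b2 := (hcon b2 hb2n hp).mpr hb2nbr
        rcases hnbr_a b2 hb2n h2 with h|h
        · exact hb2ne h
        · rw [h] at hp; exact hpla hp
      obtain ⟨c, hc1, hc2, hc3, hc4⟩ := P2 ra (by omega) hpra
      have hcc : c = a ∨ c = b ∨ c = la ∨ c = b2 := by
        unfold nadj at hb2nbr hbra; omega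
      rcases hcc with rfl|rfl|rfl|rfl
      exacts [hpa hc2, hpb hc2, hpla hc2, hpb2 hc2]
  · by_cases hpla : p la
    · -- ¬ p ra, p la
      have hbla : nadj (N+3) b la :=
        (hcon la (by omega) hpla).mp (by unfold nadj; omega)
      obtain ⟨b2, hb2n, hb2nbr, hb2ne⟩ : ∃ b2, b2 < N+3 ∧ nadj (N+3) b b2 ∧ b2 ≠ la := by
        by_cases h : rb = la
        · exact ⟨lb, by omega, by unfold nadj; omega, by unfold nadj at hbla; omega⟩
        · exact ⟨rb, by omega, by unfold nadj; omega, h⟩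
      have hpb2 : ¬ p b2 := by
        intro hp
        have h2 : nadj (N+3) a b2 := (hcon b2 hb2n hp).mpr hb2nbr
        rcases hnbr_a b2 hb2n h2 with h|h
        · rw [h] at hp; exact hpra hp
        · exact hb2ne h
      obtain ⟨c, hc1, hc2, hc3, hc4⟩ := P2 la (by omega) hpla
      have hcc : c = a ∨ c = b ∨ c = ra ∨ c = b2 := by
        unfold nadj at hb2nbr hbla; omega
      rcases hcc with rfl|rfl|rfl|rfl
      exacts [hpa hc2, hpb hc2, hpra hc2, hpb2 hc2]
    · -- neither neighbor of a is a landmark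
      have hprb : ¬ p rb := by
        intro hp
        have h2 : nadj (N+3) a rb :=
          (hcon rb (by omega) hp).mpr (by unfold nadj; omega)
        rcases hnbr_a rb (by omega) h2 with h|h
        · rw [h] at hp; exact hpra hp
        · rw [h] at hp; exact hpla hp
      have hplb : ¬ p lb := by
        intro hp
        have h2 : nadj (N+3) a lb :=
          (hcon lb (by omega) hp).mpr (by unfold nadj; omega)
        rcases hnbr_a lb (by omega) h2 with h|h
        · rw [h] at hp; exact hpra hp
        · rw [h] at hp; exact hpla hp
      refine hab (P1 a b ha hb hpa hpb ?_ ?_)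
      · intro c hcn hc
        rcases hnbr_a c hcn hc with rfl|rfl
        exacts [hpra, hpla]
      · intro c hcn hc
        rcases hnbr_b c hcn hc with rfl|rfl
        exacts [hprb, hplb]

/-! ### Explicit landmark patterns -/

def pA (i : ℕ) : Prop := i % 5 = 0 ∨ i % 5 = 3
def pA2 (i : ℕ) : Prop := i % 5 = 0 ∨ i % 5 = 2
def pB (i : ℕ) : Prop := i = 0 ∨ (4 ≤ i ∧ (i % 5 = 1 ∨ i % 5 = 4))

instance : DecidablePred pA := fun i => by unfold pA; infer_instance
instance : DecidablePred pA2 := fun i => by unfold pA2; infer_instance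
instance : DecidablePred pB := fun i => by unfold pB; infer_instance

lemma nbr_facts {n : ℕ} (p : ℕ → Prop) (a : ℕ) (hn : 3 ≤ n) (ha : a < n)
    (h : ∀ c, c < n → nadj n a c → ¬ p c) :
    ((a+1 < n ∧ ¬ p (a+1)) ∨ (a+1 = n ∧ ¬ p 0)) ∧
    ((1 ≤ a ∧ ¬ p (a-1)) ∨ (a = 0 ∧ ¬ p (n-1))) := by
  constructor
  · by_cases hh : a + 1 = n
    · exact Or.inr ⟨hh, h 0 (by omega) (by unfold nadj; omega)⟩
    · exact Or.inl ⟨by omega, h (a+1) (by omega) (by unfold nadj; omega)⟩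
  · by_cases hh : a = 0
    · exact Or.inr ⟨hh, h (n-1) (by omega) (by unfold nadj; omega)⟩
    · exact Or.inl ⟨by omega, h (a-1) (by omega) (by unfold nadj; omega)⟩

section Patterns
variable {n : ℕ}

lemma P1_pA (hn : 7 ≤ n) (hm : n % 5 = 0 ∨ n % 5 = 2) :
    ∀ a b, a < n → b < n → ¬ pA a → ¬ pA b →
      (∀ c, c < n → nadj n a c → ¬ pA c) → (∀ c, c < n → nadj n b c → ¬ pA c) → a = b := by
  intro a b ha hb hpa hpb hA hB
  obtain ⟨h1, h2⟩ := nbr_facts pA a (by omega) ha hA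
  obtain ⟨h3, h4⟩ := nbr_facts pA b (by omega) hb hB
  unfold pA at *
  omega

lemma P1_pA2 (hn : 9 ≤ n) (hm : n % 5 = 4) :
    ∀ a b, a < n → b < n → ¬ pA2 a → ¬ pA2 b →
      (∀ c, c < n → nadj n a c → ¬ pA2 c) → (∀ c, c < n → nadj n b c → ¬ pA2 c) → a = b := by
  intro a b ha hb hpa hpb hA hB
  obtain ⟨h1, h2⟩ := nbr_facts pA2 a (by omega) ha hA
  obtain ⟨h3, h4⟩ := nbr_facts pA2 b (by omega) hb hB
  unfold pA2 at *
  omega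

lemma P1_pB (hn : 8 ≤ n) (hm : n % 5 = 1 ∨ n % 5 = 3) :
    ∀ a b, a < n → b < n → ¬ pB a → ¬ pB b →
      (∀ c, c < n → nadj n a c → ¬ pB c) → (∀ c, c < n → nadj n b c → ¬ pB c) → a = b := by
  intro a b ha hb hpa hpb hA hB
  obtain ⟨h1, h2⟩ := nbr_facts pB a (by omega) ha hA
  obtain ⟨h3, h4⟩ := nbr_facts pB b (by omega) hb hB
  unfold pB at *
  omega

lemma P2_pA (hn : 7 ≤ n) (hm : n % 5 = 0 ∨ n % 5 = 2) :
    ∀ w, w < n → pA w → ∃ c, c < n ∧ pA c ∧ c ≠ w ∧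
      ((c ≤ w + 2 ∧ w ≤ c + 2) ∨ (w + n ≤ c + 2) ∨ (c + n ≤ w + 2)) := by
  intro w hw hpw
  unfold pA at *
  by_cases h0 : w % 5 = 0
  · by_cases hz : w = 0
    · exact ⟨n-2, by omega, by omega, by omega, by omega⟩
    · exact ⟨w-2, by omega, by omega, by omega, by omega⟩
  · by_cases hl : w + 2 < n
    · exact ⟨w+2, by omega, by omega, by omega, by omega⟩
    · exact ⟨0, by omega, by omega, by omega, by omega⟩

lemma P2_pA2 (hn : 9 ≤ n) (hm : n % 5 = 4) :
    ∀ w, w < n → pA2 w → ∃ c, c < n ∧ pA2 c ∧ c ≠ w ∧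
      ((c ≤ w + 2 ∧ w ≤ c + 2) ∨ (w + n ≤ c + 2) ∨ (c + n ≤ w + 2)) := by
  intro w hw hpw
  unfold pA2 at *
  by_cases h0 : w % 5 = 0
  · exact ⟨w+2, by omega, by omega, by omega, by omega⟩
  · exact ⟨w-2, by omega, by omega, by omega, by omega⟩

lemma P2_pB (hn : 8 ≤ n) (hm : n % 5 = 1 ∨ n % 5 = 3) :
    ∀ w, w < n → pB w → ∃ c, c < n ∧ pB c ∧ c ≠ w ∧
      ((c ≤ w + 2 ∧ w ≤ c + 2) ∨ (w + n ≤ c + 2) ∨ (c + n ≤ w + 2)) := by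
  intro w hw hpw
  unfold pB at *
  by_cases hz : w = 0
  · exact ⟨n-2, by omega, by omega, by omega, by omega⟩
  · by_cases h1 : w % 5 = 1
    · exact ⟨w-2, by omega, by omega, by omega, by omega⟩
    · by_cases hl : w + 2 < n
      · exact ⟨w+2, by omega, by omega, by omega, by omega⟩
      · exact ⟨0, by omega, by omega, by omega, by omega⟩

lemma H2_pA (hn : 7 ≤ n) :
    ∀ a, a < n → ¬ pA a → ∃ c, c < n ∧ pA c ∧ c ≠ a ∧ ¬ nadj n a c := by
  intro a ha hpa
  unfold pA at *
  unfold nadj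
  by_cases h : a ≤ 1 ∨ a = n-1
  · exact ⟨3, by omega, by omega, by omega, by omega⟩
  · exact ⟨0, by omega, by omega, by omega, by omega⟩

lemma H2_pA2 (hn : 9 ≤ n) :
    ∀ a, a < n → ¬ pA2 a → ∃ c, c < n ∧ pA2 c ∧ c ≠ a ∧ ¬ nadj n a c := by
  intro a ha hpa
  unfold pA2 at *
  unfold nadj
  by_cases h : a ≤ 1 ∨ a = n-1
  · exact ⟨5, by omega, by omega, by omega, by omega⟩
  · exact ⟨0, by omega, by omega, by omega, by omega⟩

lemma H2_pB (hn : 8 ≤ n) :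
    ∀ a, a < n → ¬ pB a → ∃ c, c < n ∧ pB c ∧ c ≠ a ∧ ¬ nadj n a c := by
  intro a ha hpa
  unfold pB at *
  unfold nadj
  by_cases h : a ≤ 1 ∨ a = n-1
  · exact ⟨4, by omega, by omega, by omega, by omega⟩
  · exact ⟨0, by omega, by omega, by omega, by omega⟩

end Patterns

/-! ### counting -/

lemma count_pA : ∀ m : ℕ, ((Finset.range m).filter pA).card
    = 2*(m/5) + (if m % 5 ≥ 1 then 1 else 0) + (if m % 5 ≥ 4 then 1 else 0) := by
  intro m
  induction m with
  | zero => simp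
  | succ m ih =>
    rw [Finset.range_add_one, Finset.filter_insert]
    by_cases hp : pA m
    · rw [if_pos hp, Finset.card_insert_of_notMem (by simp), ih]
      unfold pA at hp
      split_ifs <;> omega
    · rw [if_neg hp, ih]
      unfold pA at hp
      split_ifs <;> omega

lemma count_pA2 : ∀ m : ℕ, ((Finset.range m).filter pA2).card
    = 2*(m/5) + (if m % 5 ≥ 1 then 1 else 0) + (if m % 5 ≥ 3 then 1 else 0) := by
  intro m
  induction m with
  | zero => simp
  | succ m ih =>
    rw [Finset.range_add_one, Finset.filter_insert]
    by_cases hp : pA2 m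
    · rw [if_pos hp, Finset.card_insert_of_notMem (by simp), ih]
      unfold pA2 at hp
      split_ifs <;> omega
    · rw [if_neg hp, ih]
      unfold pA2 at hp
      split_ifs <;> omega

lemma count_pB : ∀ m : ℕ, ((Finset.range m).filter pB).card
    = 2*(m/5) + (if m % 5 ≥ 2 then 1 else 0) + (if m = 1 then 1 else 0) := by
  intro m
  induction m with
  | zero => simp
  | succ m ih =>
    rw [Finset.range_add_one, Finset.filter_insert]
    by_cases hp : pB m
    · rw [if_pos hp, Finset.card_insert_of_notMem (by simp), ih]
      unfold pB at hp
      split_ifs <;> omega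
    · rw [if_neg hp, ih]
      unfold pB at hp
      split_ifs <;> omega

lemma card_filter_univ_fin (n : ℕ) (p : ℕ → Prop) [DecidablePred p] :
    (Finset.univ.filter (fun i : Fin n => p i.val)).card = ((Finset.range n).filter p).card := by
  rw [← Finset.card_image_of_injective (Finset.univ.filter (fun i : Fin n => p i.val))
    Fin.val_injective]
  congr 1
  ext a
  simp only [Finset.mem_image, Finset.mem_filter, Finset.mem_range, Finset.mem_univ, true_and]
  constructor
  · rintro ⟨i, hi, rfl⟩; exact ⟨i.isLt, hi⟩
  · rintro ⟨hlt, hp⟩; exact ⟨⟨a, hlt⟩, hp, rfl⟩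

lemma upper_bound {N : ℕ} (hn : 7 ≤ N+3) :
    ∃ S : Finset (Fin (N+3) ⊕ Fin 1), Qp N S ∧ S.card = (2*(N+3)+2)/5 := by
  have h5 : (N+3) % 5 = 0 ∨ (N+3) % 5 = 1 ∨ (N+3) % 5 = 2 ∨ (N+3) % 5 = 3 ∨ (N+3) % 5 = 4 := by
    omega
  have hcard : ∀ (p : ℕ → Prop) (_ : DecidablePred p),
      ((Finset.univ.filter (fun i : Fin (N+3) => p i.val)).image
        (Sum.inl : Fin (N+3) → Fin (N+3) ⊕ Fin 1)).card
      = ((Finset.range (N+3)).filter p).card := by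
    intro p hp
    rw [Finset.card_image_of_injective _ Sum.inl_injective, card_filter_univ_fin]
  rcases h5 with h | h | h | h | h
  · refine ⟨_, Qp_of_pattern pA
      (H1_of_P1P2 hn pA (P1_pA hn (Or.inl h)) (P2_pA hn (Or.inl h))) (H2_pA hn), ?_⟩
    rw [hcard pA inferInstance, count_pA]
    split_ifs <;> omega
  · refine ⟨_, Qp_of_pattern pB
      (H1_of_P1P2 hn pB (P1_pB (by omega) (Or.inl h)) (P2_pB (by omega) (Or.inl h)))
      (H2_pB (by omega)), ?_⟩
    rw [hcard pB inferInstance, count_pB]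
    split_ifs <;> omega
  · refine ⟨_, Qp_of_pattern pA
      (H1_of_P1P2 hn pA (P1_pA hn (Or.inr h)) (P2_pA hn (Or.inr h))) (H2_pA hn), ?_⟩
    rw [hcard pA inferInstance, count_pA]
    split_ifs <;> omega
  · refine ⟨_, Qp_of_pattern pB
      (H1_of_P1P2 hn pB (P1_pB (by omega) (Or.inr h)) (P2_pB (by omega) (Or.inr h)))
      (H2_pB (by omega)), ?_⟩
    rw [hcard pB inferInstance, count_pB]
    split_ifs <;> omega
  · refine ⟨_, Qp_of_pattern pA2
      (H1_of_P1P2 hn pA2 (P1_pA2 (by omega) h) (P2_pA2 (by omega) h)) (H2_pA2 (by omega)), ?_⟩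
    rw [hcard pA2 inferInstance, count_pA2]
    split_ifs <;> omega

set_option maxRecDepth 40000

/-! ### final assembly -/

/-- For any positive integer `k` and `n ≥ 3`, the wheel `Cₙ + K₁` has
`dimₖ = 3` if `n ∈ {3,6}` and `dimₖ = ⌊(2n+2)/5⌋` otherwise. -/
theorem stmt9 (k n : ℕ) (hk : 1 ≤ k) (hn : 3 ≤ n) :
    (n = 3 ∨ n = 6 →
      dimK (graphJoin (cycleGraph n) (⊤ : SimpleGraph (Fin 1))) k = 3) ∧
    (n ≠ 3 ∧ n ≠ 6 →
      dimK (graphJoin (cycleGraph n) (⊤ : SimpleGraph (Fin 1))) k = (2 * n + 2) / 5) := by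
  obtain ⟨N, rfl⟩ : ∃ N, n = N + 3 := ⟨n - 3, by omega⟩
  constructor
  · rintro (h | h)
    · have hN : N = 0 := by omega
      subst hN
      exact dimK_wn_eq hk 3
        ⟨{Sum.inl 0, Sum.inl 1, Sum.inl 2}, by decide, by decide⟩ (by decide)
    · have hN : N = 3 := by omega
      subst hN
      exact dimK_wn_eq hk 3
        ⟨{Sum.inl 0, Sum.inl 1, Sum.inl 2}, by decide, by decide⟩ (by decide)
  · rintro ⟨h3, h6⟩
    have hlow : ∀ S : Finset (Fin (N+3) ⊕ Fin 1), Qp N S → (2*(N+3)+2)/5 ≤ S.card := by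
      intro S hS
      have := lower_bound S hS
      omega
    have hgoal : (2 * (N+3) + 2) / 5 = (2*(N+3)+2)/5 := by ring_nf
    by_cases h4 : N = 1
    · subst h4
      exact dimK_wn_eq hk _ ⟨{Sum.inl 0, Sum.inl 1}, by decide, by decide⟩ hlow
    by_cases h5 : N = 2
    · subst h5
      exact dimK_wn_eq hk _ ⟨{Sum.inl 0, Sum.inl 1}, by decide, by decide⟩ hlow
    · have h7 : 7 ≤ N + 3 := by omega
      exact dimK_wn_eq hk _ (upper_bound h7) hlow
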